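/- Let Σ be a complete simplicial fan in N_ℚ with rays generated by b̄_1,…,b̄_n for chosen b_i ∈ N. The deformed group ring ℚ[N]^Σ, with underlying vector space ⊕_{c∈N} ℚ·y^c and product y^{c₁}·y^{c₂} = y^{c₁+c₂} if c̄₁ and c̄₂ lie in a common cone of Σ and 0 otherwise, is an associative commutative ring with identity y^0. -/

import Mathlib

/-- The (simplicial) cone in `V` spanned by the rays `w i`, `i ∈ S`. -/
def coneOf {V : Type} [AddCommGroup V] [Module ℚ V] {n : ℕ}
    (w : Fin n → V) (S : Finset (Fin n)) : Set V :=
  {x | ∃ q : Fin n → ℚ, (∀ i, 0 ≤ q i) ∧ (∀ i, i ∉ S → q i = 0) ∧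
    x = ∑ i, q i • w i}

/-- The multiplication of the deformed group ring `ℚ[N]^Σ`: on the ℚ-vector space
`⊕_{c ∈ N} ℚ·y^c = (N →₀ ℚ)` it is given on monomials by
`y^{c₁} · y^{c₂} = y^{c₁+c₂}` if `bar c₁` and `bar c₂` lie in a common cone of the
fan (with cones `coneOf w S`, `S ∈ Δ`), and `0` otherwise. -/
noncomputable def dmul {N V : Type} [AddCommGroup N] [AddCommGroup V] [Module ℚ V]
    {n : ℕ} (bar : N →+ V) (w : Fin n → V) (Δ : Finset (Finset (Fin n)))
    (f g : N →₀ ℚ) : N →₀ ℚ :=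
  open Classical in
  f.sum fun c₁ a => g.sum fun c₂ b =>
    if ∃ S ∈ Δ, bar c₁ ∈ coneOf w S ∧ bar c₂ ∈ coneOf w S then
      Finsupp.single (c₁ + c₂) (a * b)
    else 0

/-- **The deformed group ring of a complete simplicial fan is an associative,
commutative, unital ring.**  Let `Σ` be a complete simplicial fan in `N_ℚ`,
described by a collection `Δ` of index sets of cones (each spanned by linearly
independent rays `w i`, closed under faces, any two cones meeting along the common
face, and covering all of `N_ℚ`).  Then the deformed product on
`ℚ[N]^Σ = (N →₀ ℚ)` is associative and commutative with identity `y^0`. -/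

lemma coneOf_zero {V : Type} [AddCommGroup V] [Module ℚ V] {n : ℕ}
    (w : Fin n → V) (S : Finset (Fin n)) : (0:V) ∈ coneOf w S :=
  ⟨0, fun _ => le_refl 0, fun _ _ => rfl, by simp⟩

lemma coneOf_add {V : Type} [AddCommGroup V] [Module ℚ V] {n : ℕ}
    {w : Fin n → V} {S : Finset (Fin n)} {x y : V}
    (hx : x ∈ coneOf w S) (hy : y ∈ coneOf w S) : x + y ∈ coneOf w S := by
  obtain ⟨q, hq0, hqS, rfl⟩ := hx
  obtain ⟨r, hr0, hrS, rfl⟩ := hy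
  refine ⟨q + r, fun i => add_nonneg (hq0 i) (hr0 i),
    fun i hi => by simp [hqS i hi, hrS i hi], ?_⟩
  rw [← Finset.sum_add_distrib]
  simp [add_smul]

lemma coneOf_rep_eq {V : Type} [AddCommGroup V] [Module ℚ V] {n : ℕ}
    {w : Fin n → V} {S : Finset (Fin n)}
    (hS : LinearIndependent ℚ fun i : S => w i.1)
    {q r : Fin n → ℚ} (hq : ∀ i ∉ S, q i = 0) (hr : ∀ i ∉ S, r i = 0)
    (h : ∑ i, q i • w i = ∑ i, r i • w i) : q = r := by
  have hsum : ∀ (p : Fin n → ℚ), (∀ i ∉ S, p i = 0) →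
      ∑ i : S, p i.1 • w i.1 = ∑ i, p i • w i := by
    intro p hp
    rw [Finset.sum_coe_sort S (fun i => p i • w i)]
    exact Finset.sum_subset (Finset.subset_univ S) (fun i _ hi => by simp [hp i hi])
  have h0 : ∑ i : S, (q i.1 - r i.1) • w i.1 = 0 := by
    simp only [sub_smul, Finset.sum_sub_distrib]
    rw [hsum q hq, hsum r hr, h, sub_self]
  have hz := Fintype.linearIndependent_iff.mp hS (fun i => q i.1 - r i.1) h0
  funext i
  by_cases hi : i ∈ S
  · exact sub_eq_zero.mp (hz ⟨i, hi⟩)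
  · rw [hq i hi, hr i hi]

lemma cone_three {V : Type} [AddCommGroup V] [Module ℚ V] {n : ℕ}
    {w : Fin n → V} {Δ : Finset (Finset (Fin n))}
    (hind : ∀ S ∈ Δ, LinearIndependent ℚ fun i : S => w i.1)
    (hglue : ∀ S ∈ Δ, ∀ T ∈ Δ, coneOf w S ∩ coneOf w T = coneOf w (S ∩ T))
    {S T : Finset (Fin n)} (hS : S ∈ Δ) (hT : T ∈ Δ)
    {x₁ x₂ : V} (h₁ : x₁ ∈ coneOf w S) (h₂ : x₂ ∈ coneOf w S)
    (h₁₂ : x₁ + x₂ ∈ coneOf w T) :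
    x₁ ∈ coneOf w T ∧ x₂ ∈ coneOf w T := by
  have hxST : x₁ + x₂ ∈ coneOf w (S ∩ T) := by
    rw [← hglue S hS T hT]; exact ⟨coneOf_add h₁ h₂, h₁₂⟩
  obtain ⟨q₁, hq₁0, hq₁S, e₁⟩ := h₁
  obtain ⟨q₂, hq₂0, hq₂S, e₂⟩ := h₂
  obtain ⟨r, hr0, hrST, er⟩ := hxST
  have hrS : ∀ i ∉ S, r i = 0 := fun i hi =>
    hrST i (fun hmem => hi (Finset.mem_of_mem_inter_left hmem))
  have heq : (fun i => q₁ i + q₂ i) = r := by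
    refine coneOf_rep_eq (hind S hS) (fun i hi => by simp [hq₁S i hi, hq₂S i hi]) hrS ?_
    rw [← er, e₁, e₂, ← Finset.sum_add_distrib]
    simp [add_smul]
  have hq₁T : ∀ i ∉ T, q₁ i = 0 := by
    intro i hi
    by_cases hiS : i ∈ S
    · have hri : r i = 0 := hrST i (by simp [hi])
      have : q₁ i + q₂ i = 0 := by rw [congrFun heq i, hri]
      linarith [hq₁0 i, hq₂0 i]
    · exact hq₁S i hiS
  have hq₂T : ∀ i ∉ T, q₂ i = 0 := by
    intro i hi
    by_cases hiS : i ∈ S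
    · have hri : r i = 0 := hrST i (by simp [hi])
      have : q₁ i + q₂ i = 0 := by rw [congrFun heq i, hri]
      linarith [hq₁0 i, hq₂0 i]
    · exact hq₂S i hiS
  exact ⟨⟨q₁, hq₁0, hq₁T, e₁⟩, ⟨q₂, hq₂0, hq₂T, e₂⟩⟩

lemma key_iff {V : Type} [AddCommGroup V] [Module ℚ V] {n : ℕ}
    {w : Fin n → V} {Δ : Finset (Finset (Fin n))}
    (hind : ∀ S ∈ Δ, LinearIndependent ℚ fun i : S => w i.1)
    (hglue : ∀ S ∈ Δ, ∀ T ∈ Δ, coneOf w S ∩ coneOf w T = coneOf w (S ∩ T))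
    (x₁ x₂ x₃ : V) :
    ((∃ S ∈ Δ, x₁ ∈ coneOf w S ∧ x₂ ∈ coneOf w S) ∧
      (∃ T ∈ Δ, x₁ + x₂ ∈ coneOf w T ∧ x₃ ∈ coneOf w T)) ↔
    ∃ U ∈ Δ, x₁ ∈ coneOf w U ∧ x₂ ∈ coneOf w U ∧ x₃ ∈ coneOf w U := by
  constructor
  · rintro ⟨⟨S, hS, h1, h2⟩, ⟨T, hT, h12, h3⟩⟩
    obtain ⟨a, b⟩ := cone_three hind hglue hS hT h1 h2 h12
    exact ⟨T, hT, a, b, h3⟩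
  · rintro ⟨U, hU, h1, h2, h3⟩
    exact ⟨⟨U, hU, h1, h2⟩, ⟨U, hU, coneOf_add h1 h2, h3⟩⟩

section dmul_lemmas
variable {N V : Type} [AddCommGroup N] [AddCommGroup V] [Module ℚ V]
    {n : ℕ} (bar : N →+ V) (w : Fin n → V) (Δ : Finset (Finset (Fin n)))

lemma dmul_zero (f : N →₀ ℚ) : dmul bar w Δ f 0 = 0 := by
  simp [dmul]

lemma zero_dmul (g : N →₀ ℚ) : dmul bar w Δ 0 g = 0 := by
  simp [dmul]

lemma dmul_add (f g h : N →₀ ℚ) :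
    dmul bar w Δ f (g + h) = dmul bar w Δ f g + dmul bar w Δ f h := by
  classical
  unfold dmul
  rw [← Finsupp.sum_add]
  refine Finsupp.sum_congr fun c₁ _ => ?_
  rw [Finsupp.sum_add_index']
  · intro c₂; split <;> simp
  · intro c₂ b₁ b₂; split <;> simp [mul_add, Finsupp.single_add]

lemma add_dmul (f g h : N →₀ ℚ) :
    dmul bar w Δ (f + g) h = dmul bar w Δ f h + dmul bar w Δ g h := by
  classical
  unfold dmul
  rw [Finsupp.sum_add_index']
  · intro c₁; simp
  · intro c₁ a₁ a₂
    rw [← Finsupp.sum_add]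
    refine Finsupp.sum_congr fun c₂ _ => ?_
    split <;> simp [add_mul, Finsupp.single_add]

lemma dmul_single_single (c₁ c₂ : N) (a b : ℚ) :
    dmul bar w Δ (Finsupp.single c₁ a) (Finsupp.single c₂ b) =
      open Classical in
      if ∃ S ∈ Δ, bar c₁ ∈ coneOf w S ∧ bar c₂ ∈ coneOf w S then
        Finsupp.single (c₁ + c₂) (a * b)
      else 0 := by
  classical
  unfold dmul
  rw [Finsupp.sum_single_index, Finsupp.sum_single_index]
  · split <;> simp
  · simp

end dmul_lemmas

theorem stmt_7 (N V : Type) [AddCommGroup N] [AddCommGroup V] [Module ℚ V]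
    (n : ℕ) (bar : N →+ V) (w : Fin n → V) (Δ : Finset (Finset (Fin n)))
    (hind : ∀ S ∈ Δ, LinearIndependent ℚ fun i : S => w i.1)
    (hdown : ∀ S ∈ Δ, ∀ T ⊆ S, T ∈ Δ)
    (hglue : ∀ S ∈ Δ, ∀ T ∈ Δ, coneOf w S ∩ coneOf w T = coneOf w (S ∩ T))
    (hcomplete : ∀ x : V, ∃ S ∈ Δ, x ∈ coneOf w S) :
    (∀ f g h : N →₀ ℚ,
        dmul bar w Δ (dmul bar w Δ f g) h = dmul bar w Δ f (dmul bar w Δ g h)) ∧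
    (∀ f g : N →₀ ℚ, dmul bar w Δ f g = dmul bar w Δ g f) ∧
    (∀ f : N →₀ ℚ, dmul bar w Δ (Finsupp.single 0 1) f = f) := by
  classical
  set P : N → N → Prop := fun c₁ c₂ =>
    ∃ S ∈ Δ, bar c₁ ∈ coneOf w S ∧ bar c₂ ∈ coneOf w S with hP
  -- associativity on monomials
  have key3 : ∀ (c₁ c₂ c₃ : N) (a b d : ℚ),
      dmul bar w Δ (dmul bar w Δ (Finsupp.single c₁ a) (Finsupp.single c₂ b))
        (Finsupp.single c₃ d) =
      dmul bar w Δ (Finsupp.single c₁ a)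
        (dmul bar w Δ (Finsupp.single c₂ b) (Finsupp.single c₃ d)) := by
    intro c₁ c₂ c₃ a b d
    have hL : (P c₁ c₂ ∧ P (c₁ + c₂) c₃) ↔
        ∃ U ∈ Δ, bar c₁ ∈ coneOf w U ∧ bar c₂ ∈ coneOf w U ∧ bar c₃ ∈ coneOf w U := by
      have := key_iff hind hglue (bar c₁) (bar c₂) (bar c₃)
      simpa [hP, map_add] using this
    have hR : (P c₂ c₃ ∧ P c₁ (c₂ + c₃)) ↔
        ∃ U ∈ Δ, bar c₁ ∈ coneOf w U ∧ bar c₂ ∈ coneOf w U ∧ bar c₃ ∈ coneOf w U := by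
      have := key_iff hind hglue (bar c₂) (bar c₃) (bar c₁)
      rw [hP]
      constructor
      · rintro ⟨h23, ⟨T, hT, hx1, hx23⟩⟩
        obtain ⟨U, hU, a1, a2, a3⟩ := this.mp ⟨h23, ⟨T, hT, by simpa [map_add] using hx23, hx1⟩⟩
        exact ⟨U, hU, a3, a1, a2⟩
      · rintro ⟨U, hU, a1, a2, a3⟩
        obtain ⟨b1, ⟨T, hT, hb1, hb2⟩⟩ := this.mpr ⟨U, hU, a2, a3, a1⟩
        exact ⟨b1, ⟨T, hT, hb2, by simpa [map_add] using hb1⟩⟩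
    rw [dmul_single_single, dmul_single_single]
    by_cases h12 : P c₁ c₂
    · rw [if_pos h12, dmul_single_single]
      by_cases h123 : P (c₁ + c₂) c₃
      · rw [if_pos h123]
        have h23 : P c₂ c₃ ∧ P c₁ (c₂ + c₃) := hR.mpr (hL.mp ⟨h12, h123⟩)
        rw [if_pos h23.1, dmul_single_single, if_pos h23.2, add_assoc, mul_assoc]
      · rw [if_neg h123]
        by_cases h23 : P c₂ c₃
        · rw [if_pos h23, dmul_single_single]
          have : ¬ P c₁ (c₂ + c₃) := fun hc => h123 (hL.mpr (hR.mp ⟨h23, hc⟩)).2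
          rw [if_neg this]
        · rw [if_neg h23, dmul_zero]
    · rw [if_neg h12, zero_dmul]
      by_cases h23 : P c₂ c₃
      · rw [if_pos h23, dmul_single_single]
        have : ¬ P c₁ (c₂ + c₃) := fun hc => h12 (hL.mpr (hR.mp ⟨h23, hc⟩)).1
        rw [if_neg this]
      · rw [if_neg h23, dmul_zero]
  -- commutativity on monomials
  have key2 : ∀ (c₁ c₂ : N) (a b : ℚ),
      dmul bar w Δ (Finsupp.single c₁ a) (Finsupp.single c₂ b) =
      dmul bar w Δ (Finsupp.single c₂ b) (Finsupp.single c₁ a) := by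
    intro c₁ c₂ a b
    rw [dmul_single_single, dmul_single_single]
    have hsym : P c₁ c₂ ↔ P c₂ c₁ := by
      constructor <;> rintro ⟨S, hS, h1, h2⟩ <;> exact ⟨S, hS, h2, h1⟩
    by_cases h : P c₁ c₂
    · rw [if_pos h, if_pos (hsym.mp h), add_comm, mul_comm]
    · rw [if_neg h, if_neg (fun hc => h (hsym.mpr hc))]
  refine ⟨?_, ?_, ?_⟩
  · -- associativity
    have step_h : ∀ (c₁ c₂ : N) (a b : ℚ) (h : N →₀ ℚ),
        dmul bar w Δ (dmul bar w Δ (Finsupp.single c₁ a) (Finsupp.single c₂ b)) h =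
        dmul bar w Δ (Finsupp.single c₁ a) (dmul bar w Δ (Finsupp.single c₂ b) h) := by
      intro c₁ c₂ a b h
      induction h using Finsupp.induction with
      | zero => simp only [dmul_zero, zero_dmul]
      | single_add c₃ d h' _ _ ih =>
        rw [dmul_add, dmul_add, dmul_add, ih, key3]
    have step_g : ∀ (c₁ : N) (a : ℚ) (g h : N →₀ ℚ),
        dmul bar w Δ (dmul bar w Δ (Finsupp.single c₁ a) g) h =
        dmul bar w Δ (Finsupp.single c₁ a) (dmul bar w Δ g h) := by
      intro c₁ a g h
      induction g using Finsupp.induction with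
      | zero => simp only [dmul_zero, zero_dmul]
      | single_add c₂ b g' _ _ ih =>
        rw [dmul_add, add_dmul, add_dmul, dmul_add, ih, step_h]
    intro f g h
    induction f using Finsupp.induction with
    | zero => simp only [dmul_zero, zero_dmul]
    | single_add c₁ a f' _ _ ih =>
      rw [add_dmul, add_dmul, add_dmul, ih, step_g]
  · -- commutativity
    have step : ∀ (c₁ : N) (a : ℚ) (g : N →₀ ℚ),
        dmul bar w Δ (Finsupp.single c₁ a) g = dmul bar w Δ g (Finsupp.single c₁ a) := by
      intro c₁ a g
      induction g using Finsupp.induction with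
      | zero => simp only [dmul_zero, zero_dmul]
      | single_add c₂ b g' _ _ ih => rw [dmul_add, add_dmul, ih, key2]
    intro f g
    induction f using Finsupp.induction with
    | zero => simp only [dmul_zero, zero_dmul]
    | single_add c₁ a f' _ _ ih => rw [add_dmul, dmul_add, ih, step]
  · -- unit
    intro f
    unfold dmul
    rw [Finsupp.sum_single_index]
    · have : ∀ c₂ ∈ f.support, ∀ b : ℚ,
          (if ∃ S ∈ Δ, bar 0 ∈ coneOf w S ∧ bar c₂ ∈ coneOf w S then
            Finsupp.single ((0:N) + c₂) (1 * b) else 0) = Finsupp.single c₂ b := by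
        intro c₂ _ b
        obtain ⟨S, hS, hx⟩ := hcomplete (bar c₂)
        rw [if_pos ⟨S, hS, by simpa using coneOf_zero w S, hx⟩, zero_add, one_mul]
      rw [Finsupp.sum_congr (fun c₂ hc₂ => this c₂ hc₂ (f c₂)), Finsupp.sum_single]
    · simp
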